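/- Define φ(t) = (1/(2t θ₃(it))) · (1 + 2∑_{j≥1} e^{−πtj²}(1 − 4πtj²)) for t > 0, where θ₃(it) = ∑_{j∈ℤ} e^{−πtj²}. Then φ(1) = 0 and the numerator 1 + 2∑_{j≥1} e^{−πtj²}(1 − 4πtj²) is strictly increasing for t ≥ 1; consequently the L²-invariant t ↦ ∑_{l,j∈ℤ} exp(−π(l² + j²t²)/t) restricted to the imaginary axis has a unique critical point at t = 1 in [1,∞). -/

import Mathlib

/-- The numerator `1 + 2∑_{j≥1} e^{−πtj²}(1 − 4πtj²)`. -/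
noncomputable def thetaNum (t : ℝ) : ℝ :=
  1 + 2 * ∑' j : ℕ, Real.exp (-Real.pi * t * ((j : ℝ) + 1) ^ 2) *
    (1 - 4 * Real.pi * t * ((j : ℝ) + 1) ^ 2)

/-- The Jacobi theta function `θ₃(it) = ∑_{j∈ℤ} e^{−πtj²}`. -/
noncomputable def theta3 (t : ℝ) : ℝ := ∑' j : ℤ, Real.exp (-Real.pi * t * (j : ℝ) ^ 2)

/-- `φ(t) = (1/(2t θ₃(it))) (1 + 2∑_{j≥1} e^{−πtj²}(1 − 4πtj²))`. -/
noncomputable def phiL2 (t : ℝ) : ℝ := (1 / (2 * t * theta3 t)) * thetaNum t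

/-- The `L²`-invariant `∑_{l,j∈ℤ} exp(−π(l² + j²t²)/t)` along the imaginary axis. -/
noncomputable def L2inv (t : ℝ) : ℝ :=
  ∑' lj : ℤ × ℤ, Real.exp (-Real.pi * ((lj.1 : ℝ) ^ 2 + (lj.2 : ℝ) ^ 2 * t ^ 2) / t)

open Real Set Filter Topology

open Real Set Filter Topology

/-- Key inequality: `x ≤ exp (x/2)` for `x ≥ 0`. -/
lemma aux_le_exp_half (x : ℝ) (hx : 0 ≤ x) : x ≤ Real.exp (x / 2) := by
  have h1 : Real.exp (x/2) = Real.exp (x/2 - 1) * Real.exp 1 := by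
    rw [← Real.exp_add]; ring_nf
  nlinarith [Real.add_one_le_exp (x/2 - 1), Real.exp_one_gt_d9, Real.exp_pos (x/2 - 1)]

lemma aux_mul_exp_le (x : ℝ) (hx : 0 ≤ x) : x * Real.exp (-x) ≤ Real.exp (-x / 2) := by
  have h := aux_le_exp_half x hx
  have := Real.exp_pos (-x)
  calc x * Real.exp (-x) ≤ Real.exp (x/2) * Real.exp (-x) := by nlinarith
    _ = Real.exp (-x/2) := by rw [← Real.exp_add]; ring_nf

/-- Geometric-type summability over `ℤ`. -/
lemma summable_exp_neg_sq {c : ℝ} (hc : 0 < c) :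
    Summable fun n : ℤ => Real.exp (-(c * (n : ℝ) ^ 2)) := by
  have hgeo : Summable fun n : ℕ => Real.exp (-c) ^ n :=
    summable_geometric_of_lt_one (Real.exp_pos _).le
      (Real.exp_lt_one_iff.mpr (by linarith))
  apply Summable.of_add_one_of_neg_add_one
  · apply hgeo.of_nonneg_of_le (fun n => (Real.exp_pos _).le)
    intro n
    rw [← Real.exp_nat_mul]
    apply Real.exp_le_exp.mpr
    push_cast
    nlinarith [sq_nonneg ((n:ℝ) - 1), Nat.cast_nonneg (α := ℝ) n]
  · apply hgeo.of_nonneg_of_le (fun n => (Real.exp_pos _).le)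
    intro n
    rw [← Real.exp_nat_mul]
    apply Real.exp_le_exp.mpr
    push_cast
    nlinarith [sq_nonneg ((n:ℝ) - 1), Nat.cast_nonneg (α := ℝ) n]

/-- The `t`-derivative of `theta3`, as a series. -/
noncomputable def theta3d (t : ℝ) : ℝ :=
  ∑' n : ℤ, -Real.pi * (n : ℝ) ^ 2 * Real.exp (-Real.pi * t * (n : ℝ) ^ 2)

lemma summable_theta3 {t : ℝ} (ht : 0 < t) :
    Summable fun n : ℤ => Real.exp (-Real.pi * t * (n : ℝ) ^ 2) :=
  (summable_exp_neg_sq (mul_pos Real.pi_pos ht)).congr fun n => by ring_nf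

lemma deriv_bound {y : ℝ} (hy : 1/2 < y) (n : ℤ) :
    Real.pi * (n:ℝ)^2 * Real.exp (-Real.pi * y * (n:ℝ)^2) ≤
      2 * Real.exp (-(Real.pi/4 * (n:ℝ)^2)) := by
  have hy0 : (0:ℝ) < y := by linarith
  have hx : 0 ≤ Real.pi * y * (n:ℝ)^2 := by positivity
  have h1 := aux_mul_exp_le _ hx
  have h2 : Real.exp (-(Real.pi * y * (n:ℝ)^2) / 2) ≤ Real.exp (-(Real.pi/4 * (n:ℝ)^2)) := by
    apply Real.exp_le_exp.mpr
    nlinarith [sq_nonneg (n:ℝ), Real.pi_pos]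
  have h3 : -(Real.pi * y * (n:ℝ)^2) = -Real.pi * y * (n:ℝ)^2 := by ring
  rw [h3] at h1
  have h4 : Real.pi * (n:ℝ)^2 * Real.exp (-Real.pi * y * (n:ℝ)^2) * y ≤
      Real.exp (-(Real.pi/4 * (n:ℝ)^2)) := by
    calc Real.pi * (n:ℝ)^2 * Real.exp (-Real.pi * y * (n:ℝ)^2) * y
        = Real.pi * y * (n:ℝ)^2 * Real.exp (-Real.pi * y * (n:ℝ)^2) := by ring
      _ ≤ Real.exp (-(Real.pi * y * (n:ℝ)^2) / 2) := by rw [h3]; exact h1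
      _ ≤ _ := h2
  nlinarith [mul_nonneg (mul_nonneg Real.pi_pos.le (sq_nonneg (n:ℝ)))
    (Real.exp_pos (-Real.pi * y * (n:ℝ)^2)).le]

lemma hasDerivAt_theta3 {t : ℝ} (ht : 1/2 < t) : HasDerivAt theta3 (theta3d t) t := by
  have hu : Summable (fun n : ℤ => 2 * Real.exp (-(Real.pi/4 * (n:ℝ)^2))) :=
    (summable_exp_neg_sq (by positivity)).mul_left 2
  have hterm : ∀ (n : ℤ) (y : ℝ),
      HasDerivAt (fun z => Real.exp (-Real.pi * z * (n:ℝ)^2))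
        (-Real.pi * (n:ℝ)^2 * Real.exp (-Real.pi * y * (n:ℝ)^2)) y := by
    intro n y
    have h1 : HasDerivAt (fun z : ℝ => -Real.pi * (n:ℝ)^2 * z)
        (-Real.pi * (n:ℝ)^2 * 1) y := (hasDerivAt_id' y).const_mul _
    have hfun : (fun z : ℝ => Real.exp (-Real.pi * z * (n:ℝ)^2))
        = fun z : ℝ => Real.exp (-Real.pi * (n:ℝ)^2 * z) := by
      funext z; ring_nf
    rw [hfun]
    convert h1.exp using 1
    ring_nf
  have key := hasDerivAt_tsum_of_isPreconnected hu isOpen_Ioi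
    (convex_Ioi (1/2 : ℝ)).isPreconnected
    (fun n y _ => hterm n y)
    (fun n y hy => by
      have : ‖-Real.pi * (n:ℝ)^2 * Real.exp (-Real.pi * y * (n:ℝ)^2)‖
          = Real.pi * (n:ℝ)^2 * Real.exp (-Real.pi * y * (n:ℝ)^2) := by
        rw [Real.norm_eq_abs, abs_mul, Real.abs_exp, neg_mul, abs_neg,
          abs_of_nonneg (by positivity)]
      rw [this]
      exact deriv_bound hy n)
    (show (1:ℝ) ∈ Ioi (1/2 : ℝ) by norm_num)
    (by simpa using summable_theta3 one_pos) ht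
  exact key

lemma summable_deriv_term {t : ℝ} (ht : 1/2 < t) :
    Summable fun n : ℤ => -Real.pi * (n:ℝ)^2 * Real.exp (-Real.pi * t * (n:ℝ)^2) := by
  have hu : Summable (fun n : ℤ => 2 * Real.exp (-(Real.pi/4 * (n:ℝ)^2))) :=
    (summable_exp_neg_sq (by positivity)).mul_left 2
  apply hu.of_norm_bounded
  intro n
  have : ‖-Real.pi * (n:ℝ)^2 * Real.exp (-Real.pi * t * (n:ℝ)^2)‖
      = Real.pi * (n:ℝ)^2 * Real.exp (-Real.pi * t * (n:ℝ)^2) := by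
    rw [Real.norm_eq_abs, abs_mul, Real.abs_exp, neg_mul, abs_neg,
      abs_of_nonneg (by positivity)]
  rw [this]
  exact deriv_bound ht n

/-- Summability of the weighted series `∑ e^{-πtn²}(1-4πtn²)` over `ℤ`. -/
lemma summable_weight {t : ℝ} (ht : 1/2 < t) :
    Summable fun n : ℤ => Real.exp (-Real.pi * t * (n:ℝ)^2) *
      (1 - 4 * Real.pi * t * (n:ℝ)^2) := by
  have h1 := summable_theta3 (by linarith : (0:ℝ) < t)
  have h2 := (summable_deriv_term ht).mul_left (4 * t)
  have := h1.add h2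
  apply this.congr
  intro n
  ring

/-- `thetaNum t = theta3 t + 4t·theta3d t` for `t > 1/2`. -/
lemma thetaNum_eq {t : ℝ} (ht : 1/2 < t) :
    thetaNum t = theta3 t + 4 * t * theta3d t := by
  have h1 := summable_theta3 (by linarith : (0:ℝ) < t)
  have h2 := (summable_deriv_term ht).mul_left (4 * t)
  -- θ + 4tθ' = ∑_{n:ℤ} F n with F n = e^{-πtn²}(1-4πtn²)
  have key : theta3 t + 4 * t * theta3d t
      = ∑' n : ℤ, Real.exp (-Real.pi * t * (n:ℝ)^2) * (1 - 4 * Real.pi * t * (n:ℝ)^2) := by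
    rw [theta3, theta3d, ← tsum_mul_left, ← Summable.tsum_add h1 h2]
    exact tsum_congr fun n => by ring
  rw [key]
  -- split the ℤ-sum
  set F : ℤ → ℝ := fun n => Real.exp (-Real.pi * t * (n:ℝ)^2) * (1 - 4 * Real.pi * t * (n:ℝ)^2)
    with hF
  have hFsum : Summable F := summable_weight ht
  have hs1 : Summable fun n : ℕ => F ((n:ℤ) + 1) :=
    hFsum.comp_injective fun a b hab => by omega
  have hs2 : Summable fun n : ℕ => F (-((n:ℤ) + 1)) :=
    hFsum.comp_injective fun a b hab => by omega
  rw [tsum_of_add_one_of_neg_add_one hs1 hs2]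
  have hF0 : F 0 = 1 := by simp [hF]
  have hFe : ∀ n : ℕ, F (-((n:ℤ) + 1)) = F ((n:ℤ) + 1) := by
    intro n; simp only [hF]; push_cast; ring_nf
  have hFn : ∀ n : ℕ, F ((n:ℤ) + 1) = Real.exp (-Real.pi * t * ((n:ℝ) + 1)^2) *
      (1 - 4 * Real.pi * t * ((n:ℝ) + 1)^2) := by
    intro n; simp only [hF]; push_cast; ring_nf
  rw [hF0, tsum_congr hFe, tsum_congr hFn]
  rw [thetaNum]
  ring

lemma theta3_pos {t : ℝ} (ht : 0 < t) : 0 < theta3 t :=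
  Summable.tsum_pos (summable_theta3 ht) (fun n => (Real.exp_pos _).le) 0 (Real.exp_pos _)

/-- Modular transformation: `θ(1/t) = √t · θ(t)` for `t > 0`. -/
lemma theta3_inv {t : ℝ} (ht : 0 < t) : theta3 t⁻¹ = Real.sqrt t * theta3 t := by
  have h := Real.tsum_exp_neg_mul_int_sq ht
  have h2 : (∑' n : ℤ, Real.exp (-Real.pi / t * (n:ℝ) ^ 2)) = theta3 t⁻¹ := by
    rw [theta3]
    exact tsum_congr fun n => by rw [div_eq_mul_inv]
  rw [h2] at h
  have hsq : t ^ ((1:ℝ)/2) = Real.sqrt t := (Real.sqrt_eq_rpow t).symm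
  rw [hsq] at h
  have h3 : Real.sqrt t ≠ 0 := ne_of_gt (Real.sqrt_pos.mpr ht)
  have h4 : theta3 t = 1 / Real.sqrt t * theta3 t⁻¹ := by rw [theta3]; exact h
  rw [h4]
  field_simp

/-- Factorization of the `L²`-invariant: `L2inv t = √t · θ(t)²` for `t > 0`. -/
lemma L2inv_eq {t : ℝ} (ht : 0 < t) :
    (∑' lj : ℤ × ℤ, Real.exp (-Real.pi * ((lj.1 : ℝ) ^ 2 + (lj.2 : ℝ) ^ 2 * t ^ 2) / t))
      = Real.sqrt t * theta3 t ^ 2 := by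
  have hne : t ≠ 0 := ne_of_gt ht
  have hsplit : ∀ lj : ℤ × ℤ,
      Real.exp (-Real.pi * ((lj.1 : ℝ) ^ 2 + (lj.2 : ℝ) ^ 2 * t ^ 2) / t)
      = Real.exp (-Real.pi * t⁻¹ * (lj.1 : ℝ) ^ 2) * Real.exp (-Real.pi * t * (lj.2 : ℝ) ^ 2) := by
    intro lj
    rw [← Real.exp_add]
    congr 1
    field_simp
    ring
  rw [tsum_congr hsplit]
  have hn1 : Summable fun l : ℤ => ‖Real.exp (-Real.pi * t⁻¹ * (l:ℝ) ^ 2)‖ := by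
    simpa [Real.norm_eq_abs, Real.abs_exp] using summable_theta3 (inv_pos.mpr ht)
  have hn2 : Summable fun j : ℤ => ‖Real.exp (-Real.pi * t * (j:ℝ) ^ 2)‖ := by
    simpa [Real.norm_eq_abs, Real.abs_exp] using summable_theta3 ht
  rw [← tsum_mul_tsum_of_summable_norm hn1 hn2]
  have : (∑' l : ℤ, Real.exp (-Real.pi * t⁻¹ * (l:ℝ) ^ 2)) = theta3 t⁻¹ := rfl
  rw [this, theta3_inv ht]
  rw [theta3]
  ring

/-- Each term `t ↦ e^{-at}(1-4at)` is strictly increasing on `[1,∞)` when `a ≥ π`. -/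
lemma term_strictMonoOn {a : ℝ} (ha : Real.pi ≤ a) :
    StrictMonoOn (fun t : ℝ => Real.exp (-(a * t)) * (1 - 4 * (a * t))) (Set.Ici 1) := by
  have ha0 : 0 < a := lt_of_lt_of_le Real.pi_pos ha
  have hder : ∀ x : ℝ, HasDerivAt (fun t => Real.exp (-(a * t)) * (1 - 4 * (a * t)))
      (Real.exp (-(a * x)) * (a * (4 * (a * x) - 5))) x := by
    intro x
    have h1 : HasDerivAt (fun z : ℝ => -a * z) (-a * 1) x := (hasDerivAt_id' x).const_mul _
    have h1' : HasDerivAt (fun z : ℝ => -(a * z)) (-a * 1) x := by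
      have : (fun z : ℝ => -(a * z)) = fun z : ℝ => -a * z := by funext z; ring
      rw [this]; exact h1
    have h2 := h1'.exp
    have h3 : HasDerivAt (fun z : ℝ => 4 * (a * z)) (4 * a * 1) x := by
      have : (fun z : ℝ => 4 * (a * z)) = fun z : ℝ => 4 * a * z := by funext z; ring
      rw [this]; exact (hasDerivAt_id' x).const_mul _
    have h4 := h3.const_sub 1
    have h5 := h2.mul h4
    exact h5.congr_deriv (by ring)
  apply strictMonoOn_of_deriv_pos (convex_Ici 1)
  · exact (((Real.continuous_exp.comp (by continuity)).mul (by continuity))).continuousOn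
  · intro x hx
    rw [interior_Ici] at hx
    rw [(hder x).deriv]
    have hx1 : (1:ℝ) < x := hx
    have h5 : 0 < 4 * (a * x) - 5 := by nlinarith [Real.pi_gt_three]
    positivity

/-- Strict monotonicity of `thetaNum` on `[1,∞)`. -/
lemma thetaNum_strictMono : StrictMonoOn thetaNum (Set.Ici 1) := by
  intro s hs t ht hst
  have hs1 : (1:ℝ) ≤ s := hs
  have hterm : ∀ j : ℕ, (fun u : ℝ => Real.exp (-Real.pi * u * ((j:ℝ)+1)^2) *
      (1 - 4 * Real.pi * u * ((j:ℝ)+1)^2))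
      = fun u : ℝ => Real.exp (-(Real.pi * ((j:ℝ)+1)^2 * u)) *
        (1 - 4 * (Real.pi * ((j:ℝ)+1)^2 * u)) := by
    intro j; funext u; ring_nf
  have ha : ∀ j : ℕ, Real.pi ≤ Real.pi * ((j:ℝ)+1)^2 := by
    intro j
    have h1 : (1:ℝ) ≤ ((j:ℝ)+1)^2 := by nlinarith [Nat.cast_nonneg (α := ℝ) j]
    nlinarith [Real.pi_pos]
  -- summability of the ℕ-indexed series at any u > 1/2
  have hsum : ∀ u : ℝ, 1/2 < u → Summable (fun j : ℕ =>
      Real.exp (-Real.pi * u * ((j:ℝ)+1)^2) * (1 - 4 * Real.pi * u * ((j:ℝ)+1)^2)) := by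
    intro u hu
    have := (summable_weight hu).comp_injective
      (fun a b hab => by exact_mod_cast add_right_cancel hab :
        Function.Injective fun n : ℕ => (n:ℤ) + 1)
    apply this.congr
    intro j
    simp only [Function.comp_apply]
    push_cast
    ring_nf
  have hlt : ∀ j : ℕ, Real.exp (-Real.pi * s * ((j:ℝ)+1)^2) *
      (1 - 4 * Real.pi * s * ((j:ℝ)+1)^2) < Real.exp (-Real.pi * t * ((j:ℝ)+1)^2) *
      (1 - 4 * Real.pi * t * ((j:ℝ)+1)^2) := by
    intro j
    have h := term_strictMonoOn (ha j) hs ht hst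
    have e1 : ∀ u : ℝ, Real.exp (-Real.pi * u * ((j:ℝ)+1)^2) *
        (1 - 4 * Real.pi * u * ((j:ℝ)+1)^2)
        = Real.exp (-(Real.pi * ((j:ℝ)+1)^2 * u)) *
          (1 - 4 * (Real.pi * ((j:ℝ)+1)^2 * u)) := fun u => congrFun (hterm j) u
    rw [e1 s, e1 t]
    exact h
  have hS : (∑' j : ℕ, Real.exp (-Real.pi * s * ((j:ℝ)+1)^2) *
      (1 - 4 * Real.pi * s * ((j:ℝ)+1)^2)) < ∑' j : ℕ, Real.exp (-Real.pi * t * ((j:ℝ)+1)^2) *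
      (1 - 4 * Real.pi * t * ((j:ℝ)+1)^2) :=
    Summable.tsum_lt_tsum (fun j => (hlt j).le) (hlt 0)
      (hsum s (by linarith)) (hsum t (by linarith [lt_of_le_of_lt hs1 hst]))
  rw [thetaNum, thetaNum]
  linarith

/-- `thetaNum 1 = 0`, via the modular transformation. -/
lemma thetaNum_one : thetaNum 1 = 0 := by
  have hθ1 : HasDerivAt theta3 (theta3d 1) 1 := hasDerivAt_theta3 (by norm_num)
  have hθinv : HasDerivAt theta3 (theta3d 1) ((1:ℝ)⁻¹) := by rw [inv_one]; exact hθ1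
  have hinv : HasDerivAt (fun s : ℝ => s⁻¹) (-(((1:ℝ))^2)⁻¹) 1 := hasDerivAt_inv one_ne_zero
  have hcomp := HasDerivAt.comp (1:ℝ) hθinv hinv
  simp only [Function.comp_def] at hcomp
  have hsq : HasDerivAt Real.sqrt (1/(2*Real.sqrt 1)) 1 := Real.hasDerivAt_sqrt one_ne_zero
  have hmul := hsq.mul hθ1
  have hG := hcomp.sub hmul
  have hzero : (fun s : ℝ => theta3 s⁻¹ - Real.sqrt s * theta3 s) =ᶠ[𝓝 (1:ℝ)]
      fun _ => (0:ℝ) := by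
    filter_upwards [Ioi_mem_nhds (by norm_num : (0:ℝ) < 1)] with s hs
    rw [theta3_inv hs, sub_self]
  have h0 : HasDerivAt (fun s : ℝ => theta3 s⁻¹ - Real.sqrt s * theta3 s) 0 1 :=
    (hasDerivAt_const 1 (0:ℝ)).congr_of_eventuallyEq hzero
  have huniq := hG.unique h0
  rw [Real.sqrt_one] at huniq
  rw [thetaNum_eq (by norm_num : (1:ℝ)/2 < 1)]
  norm_num at huniq ⊢
  linarith

lemma algebra_aux (θ θd s t : ℝ) (hs : 0 < s) (hst : s^2 = t) :
    1/(2*s)*θ^2 + s*(2*θ^1*θd) = θ/(2*s)*(θ + 4*t*θd) := by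
  subst hst
  field_simp
  ring

/-- `φ(1) = 0`, the numerator is strictly increasing for `t ≥ 1`, and
consequently the `L²`-invariant restricted to the imaginary axis has a unique
critical point at `t = 1` in `[1,∞)`. -/
theorem L2_invariant_critical_point :
    phiL2 1 = 0 ∧ StrictMonoOn thetaNum (Set.Ici 1) ∧
    ∀ t ∈ Set.Ici (1 : ℝ), (deriv L2inv t = 0 ↔ t = 1) := by
  refine ⟨?_, thetaNum_strictMono, ?_⟩
  · rw [phiL2, thetaNum_one, mul_zero]
  · intro t ht
    have ht1 : (1:ℝ) ≤ t := ht
    have ht0 : (0:ℝ) < t := by linarith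
    have hth : (1:ℝ)/2 < t := by linarith
    have hθ : HasDerivAt theta3 (theta3d t) t := hasDerivAt_theta3 hth
    have hsq : HasDerivAt Real.sqrt (1/(2*Real.sqrt t)) t := Real.hasDerivAt_sqrt (ne_of_gt ht0)
    have hmul := hsq.mul (hθ.pow 2)
    have heq : L2inv =ᶠ[𝓝 t] fun s => Real.sqrt s * theta3 s ^ 2 := by
      filter_upwards [Ioi_mem_nhds ht0] with s hs
      exact L2inv_eq hs
    have hD : deriv L2inv t = 1/(2*Real.sqrt t) * theta3 t ^ 2
        + Real.sqrt t * ((2:ℕ) * theta3 t ^ 1 * theta3d t) := by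
      rw [heq.deriv_eq]; exact hmul.deriv
    have hs0 : 0 < Real.sqrt t := Real.sqrt_pos.mpr ht0
    have hfac : deriv L2inv t = theta3 t / (2 * Real.sqrt t) * thetaNum t := by
      rw [hD, thetaNum_eq hth]
      push_cast
      exact algebra_aux (theta3 t) (theta3d t) (Real.sqrt t) t hs0 (Real.sq_sqrt ht0.le)
    have hθpos := theta3_pos ht0
    have hpos : 0 < theta3 t / (2 * Real.sqrt t) := by positivity
    constructor
    · intro h
      by_contra hne
      have htgt : 1 < t := lt_of_le_of_ne ht1 (Ne.symm hne)
      have hmono := thetaNum_strictMono (self_mem_Ici (a := (1:ℝ))) ht htgt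
      rw [thetaNum_one] at hmono
      rw [hfac] at h
      nlinarith
    · intro h
      subst h
      rw [hfac, thetaNum_one, mul_zero]
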